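/- Let K be a compact invariant set of a homeomorphism f of a compact metric space, and let π : K̂ → K be a two-fold covering with deck transformation σ (a fixed-point-free involution with π ∘ σ = π), and f̂ : K̂ → K̂ a lift of f (π ∘ f̂ = f ∘ π) commuting with σ. Assume K̂ is not the disjoint union of two nonempty f̂-invariant compact sets A and σ(A). If (K, f) is chain-transitive then (K̂, f̂) is chain-transitive. -/
import Mathlib


open Set

/-- `x ⊣ y`: for every `ε > 0` there is an `ε`-pseudo-orbit from `x` to `y` of
length `≥ 1`. -/
def ChainRel {X : Type*} [MetricSpace X] (h : X → X) (x y : X) : Prop :=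
  ∀ ε : ℝ, 0 < ε → ∃ n : ℕ, 1 ≤ n ∧ ∃ z : ℕ → X, z 0 = x ∧ z n = y ∧
    ∀ k < n, dist (h (z k)) (z (k + 1)) < ε

section Aux

variable {X : Type*} [MetricSpace X]

/-- Concatenation of two `ε`-chains. -/
theorem chain_concat {h : X → X} {ε : ℝ} {n m : ℕ} {z w : ℕ → X}
    (hznw0 : z n = w 0) (hz : ∀ k < n, dist (h (z k)) (z (k + 1)) < ε)
    (hw : ∀ k < m, dist (h (w k)) (w (k + 1)) < ε) :
    ∃ u : ℕ → X, u 0 = z 0 ∧ u (n + m) = w m ∧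
      ∀ k < n + m, dist (h (u k)) (u (k + 1)) < ε := by
  refine ⟨fun k => if k < n then z k else w (k - n), ?_, ?_, ?_⟩
  · by_cases hn : 0 < n
    · simp [hn]
    · have hn0 : n = 0 := by omega
      simp [hn0, ← hznw0, hn0]
  · have : ¬ (n + m < n) := by omega
    simp only [this, if_false]
    congr 1
    omega
  · intro k hk
    rcases lt_or_ge k n with hkn | hkn
    · have huk1 : (if k + 1 < n then z (k + 1) else w (k + 1 - n)) = z (k + 1) := by
        rcases lt_or_ge (k + 1) n with h1 | h1
        · simp [h1]
        · have : k + 1 = n := by omega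
          simp [this, hznw0]
      simp only [if_pos hkn, huk1]
      exact hz k hkn
    · have h1 : ¬ (k < n) := by omega
      have h2 : ¬ (k + 1 < n) := by omega
      simp only [if_neg h1, if_neg h2]
      have hkey := hw (k - n) (by omega)
      have : k + 1 - n = k - n + 1 := by omega
      rw [this]
      exact hkey

theorem chainRel_trans {h : X → X} {a b c : X} (hab : ChainRel h a b)
    (hbc : ChainRel h b c) : ChainRel h a c := by
  intro ε hε
  obtain ⟨n, hn, z, hz0, hzn, hz⟩ := hab ε hε
  obtain ⟨m, hm, w, hw0, hwm, hw⟩ := hbc ε hε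
  obtain ⟨u, hu0, huN, hu⟩ := chain_concat (hzn.trans hw0.symm) hz hw
  exact ⟨n + m, by omega, u, hu0.trans hz0, huN.trans hwm, hu⟩

theorem chainRel_apply (h : X → X) (a : X) : ChainRel h a (h a) := by
  intro ε hε
  refine ⟨1, le_refl 1, fun k => h^[k] a, rfl, by simp, ?_⟩
  intro k hk
  interval_cases k
  simp [hε]

theorem chainRel_isClosed (h : X → X) (a : X) : IsClosed {y | ChainRel h a y} := by
  rw [← isOpen_compl_iff, Metric.isOpen_iff]
  intro y hy
  simp only [mem_compl_iff, mem_setOf_eq, ChainRel] at hy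
  push_neg at hy
  obtain ⟨ε, hε, hno⟩ := hy
  refine ⟨ε / 2, by linarith, fun y' hy' => ?_⟩
  simp only [mem_compl_iff, mem_setOf_eq]
  intro hy'c
  obtain ⟨n, hn, z, hz0, hzn, hz⟩ := hy'c (ε / 2) (by linarith)
  have hyd : dist y' y < ε / 2 := Metric.mem_ball.mp hy'
  obtain ⟨k, hk, hge⟩ := hno n hn (fun k => if k = n then y else z k)
    (by simp only [if_neg (by omega : (0:ℕ) ≠ n)]; exact hz0) (by simp)
  have hzk : (if k = n then y else z k) = z k := by
    rw [if_neg (by omega)]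
  rw [hzk] at hge
  rcases eq_or_lt_of_le (Nat.succ_le_of_lt hk) with h1 | h1
  · rw [if_pos h1] at hge
    have h2 := hz k hk
    rw [show k + 1 = n from h1, hzn] at h2
    have : dist (h (z k)) y ≤ dist (h (z k)) y' + dist y' y := dist_triangle _ _ _
    linarith
  · rw [if_neg (by omega)] at hge
    have h2 := hz k hk
    linarith

theorem chainRel_map [CompactSpace X] {h g : X → X} (hg : Continuous g)
    (hco : ∀ x, h (g x) = g (h x)) {a b : X} (hab : ChainRel h a b) :
    ChainRel h (g a) (g b) := by
  intro ε hε
  obtain ⟨δ, hδ, hδ'⟩ := Metric.uniformContinuous_iff.mp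
    (CompactSpace.uniformContinuous_of_continuous hg) ε hε
  obtain ⟨n, hn, z, hz0, hzn, hz⟩ := hab δ hδ
  refine ⟨n, hn, fun k => g (z k), by simp [hz0], by simp [hzn], fun k hk => ?_⟩
  rw [hco]
  exact hδ' (hz k hk)

/-- Removing the last step of a chain: `a ⊣ b → a ⊣ f⁻¹ b`, assuming `a ⊣ a`. -/
theorem chainRel_symm_target [CompactSpace X] (f : X ≃ₜ X) {a b : X}
    (haa : ChainRel (⇑f) a a) (hab : ChainRel (⇑f) a b) :
    ChainRel (⇑f) a (f.symm b) := by
  intro ε hε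
  obtain ⟨δ₀, hδ₀, hδ₀'⟩ := Metric.uniformContinuous_iff.mp
    (CompactSpace.uniformContinuous_of_continuous f.symm.continuous) (ε / 2) (by linarith)
  set δ := min δ₀ (ε / 2) with hδdef
  have hδpos : 0 < δ := lt_min hδ₀ (by linarith)
  have hδle : δ ≤ ε / 2 := min_le_right _ _
  obtain ⟨n, hn, z, hz0, hzn, hz⟩ := haa δ hδpos
  obtain ⟨m, hm, w, hw0, hwm, hw⟩ := hab δ hδpos
  obtain ⟨u, hu0, huN, hu⟩ := chain_concat (hzn.trans hw0.symm) hz hw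
  have hN2 : 2 ≤ n + m := by omega
  refine ⟨n + m - 1, by omega, fun k => if k < n + m - 1 then u k else f.symm b, ?_, ?_, ?_⟩
  · show (if 0 < n + m - 1 then u 0 else f.symm b) = a
    rw [if_pos (by omega)]
    exact hu0.trans hz0
  · show (if n + m - 1 < n + m - 1 then u (n + m - 1) else f.symm b) = f.symm b
    rw [if_neg (by omega)]
  · intro k hk
    show dist (f (if k < n + m - 1 then u k else f.symm b))
        (if k + 1 < n + m - 1 then u (k + 1) else f.symm b) < ε
    rw [if_pos hk]
    by_cases hk1 : k + 1 < n + m - 1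
    · rw [if_pos hk1]
      have := hu k (by omega)
      linarith
    · rw [if_neg hk1]
      have hkeq : k + 1 = n + m - 1 := by omega
      have h1 : dist (f (u k)) (u (k + 1)) < δ := hu k (by omega)
      have h2 : dist (f (u (k + 1))) b < δ := by
        have hx := hu (k + 1) (by omega)
        have he : k + 1 + 1 = n + m := by omega
        rw [he, huN, hwm] at hx
        exact hx
      have h3 : dist (u (k + 1)) (f.symm b) < ε / 2 := by
        have hy := hδ₀' (lt_of_lt_of_le h2 (min_le_left _ _))
        rwa [Homeomorph.symm_apply_apply] at hy
      have := dist_triangle (f (u k)) (u (k + 1)) (f.symm b)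
      linarith

end Aux

/-- Let `π : K̂ → K` be a two-fold covering of compact invariant dynamics, with
deck involution `σ` (fixed-point free, exchanging the two preimages of each
point), and `f̂` a lift of `f` commuting with `σ`. If `K̂ is not the disjoint
union of two nonempty invariant compact sets `A` and `σ(A)`, and `(K, f)` is
chain-transitive, then `(K̂, f̂)` is chain-transitive. -/
theorem stmt7 {K Khat : Type*} [MetricSpace K] [CompactSpace K]
    [MetricSpace Khat] [CompactSpace Khat]
    (f : K ≃ₜ K) (fhat : Khat ≃ₜ Khat) (σ : Khat ≃ₜ Khat) (π : Khat → K)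
    (hπcont : Continuous π) (hπsurj : Function.Surjective π)
    (hπσ : ∀ a, π (σ a) = π a) (hσinv : ∀ a, σ (σ a) = a)
    (hσfree : ∀ a, σ a ≠ a)
    (hfib : ∀ a b, π a = π b → b = a ∨ b = σ a)
    (hlift : ∀ a, π (fhat a) = f (π a))
    (hcomm : ∀ a, fhat (σ a) = σ (fhat a))
    (hnosplit : ¬ ∃ A : Set Khat, A.Nonempty ∧ IsClosed A ∧ ⇑fhat '' A = A ∧
        (⇑σ '' A) ∩ A = ∅ ∧ A ∪ ⇑σ '' A = univ)
    (hct : ∀ x y : K, ChainRel (⇑f) x y) :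
    ∀ a b : Khat, ChainRel (⇑fhat) a b := by
  classical
  -- uniform fiber-lifting modulus
  have hdelta : ∀ ε : ℝ, 0 < ε → ∃ δ : ℝ, 0 < δ ∧ ∀ a c : Khat,
      dist (π a) (π c) < δ → dist a c < ε ∨ dist a (σ c) < ε := by
    intro ε hε
    set T : Set (Khat × Khat) := {p | ε ≤ dist p.1 p.2 ∧ ε ≤ dist p.1 (σ p.2)} with hT
    have hTclosed : IsClosed T := by
      apply IsClosed.inter
      · exact isClosed_le continuous_const (continuous_fst.dist continuous_snd)
      · exact isClosed_le continuous_const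
          (continuous_fst.dist (σ.continuous.comp continuous_snd))
    have hTcompact : IsCompact T := hTclosed.isCompact
    rcases T.eq_empty_or_nonempty with hTe | hTne
    · refine ⟨1, one_pos, fun a c _ => ?_⟩
      by_contra hcon
      push_neg at hcon
      have hmem : (a, c) ∈ T := ⟨hcon.1, hcon.2⟩
      rw [hTe] at hmem
      exact absurd hmem (Set.notMem_empty _)
    · obtain ⟨p₀, hp₀T, hp₀min⟩ := hTcompact.exists_isMinOn hTne
        ((hπcont.comp continuous_fst).dist (hπcont.comp continuous_snd)).continuousOn
      refine ⟨dist (π p₀.1) (π p₀.2), ?_, ?_⟩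
      · rcases lt_or_eq_of_le (dist_nonneg : (0:ℝ) ≤ dist (π p₀.1) (π p₀.2)) with h | h
        · exact h
        · exfalso
          have hpeq : π p₀.1 = π p₀.2 := by
            rw [← dist_eq_zero]; exact h.symm
          rcases hfib p₀.1 p₀.2 hpeq with h1 | h1
          · have := hp₀T.1
            rw [h1, dist_self] at this
            linarith
          · have := hp₀T.2
            rw [h1, hσinv, dist_self] at this
            linarith
      · intro a c hac
        by_contra hcon
        push_neg at hcon
        have hmem : (a, c) ∈ T := ⟨hcon.1, hcon.2⟩
        have hmin := isMinOn_iff.mp hp₀min (a, c) hmem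
        exact absurd hac (not_lt.mpr hmin)
  -- lifting chains: an ε-chain upstairs from a to b or σ b
  have hlift_chain : ∀ (a b : Khat) (ε : ℝ), 0 < ε → ∃ n, 1 ≤ n ∧ ∃ z : ℕ → Khat,
      z 0 = a ∧ (z n = b ∨ z n = σ b) ∧ ∀ k < n, dist (fhat (z k)) (z (k + 1)) < ε := by
    intro a b ε hε
    obtain ⟨δ, hδpos, hδ⟩ := hdelta ε hε
    obtain ⟨n, hn, w, hw0, hwn, hwstep⟩ := hct (π a) (π b) δ hδpos
    have step : ∀ u : Khat, ∀ k : ℕ, k < n → π u = w k →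
        ∃ v : Khat, π v = w (k + 1) ∧ dist (fhat u) v < ε := by
      intro u k hk hu
      obtain ⟨c, hc⟩ := hπsurj (w (k + 1))
      have hd : dist (π (fhat u)) (π c) < δ := by
        rw [hlift, hu, hc]
        exact hwstep k hk
      rcases hδ (fhat u) c hd with h | h
      · exact ⟨c, hc, h⟩
      · exact ⟨σ c, by rw [hπσ, hc], h⟩
    let z : ℕ → Khat := fun k => Nat.rec (motive := fun _ => Khat) a
      (fun k zk => if h : k < n ∧ π zk = w k then (step zk k h.1 h.2).choose else zk) k
    have hz0 : z 0 = a := rfl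
    have hzsucc : ∀ k, z (k + 1) =
        if h : k < n ∧ π (z k) = w k then (step (z k) k h.1 h.2).choose else z k :=
      fun k => rfl
    have hinv : ∀ k, k ≤ n → π (z k) = w k := by
      intro k
      induction k with
      | zero => intro _; rw [hz0, ← hw0]
      | succ k ih =>
        intro hk
        have hk' : k < n := by omega
        have h := ih (by omega)
        rw [hzsucc, dif_pos ⟨hk', h⟩]
        exact (step (z k) k hk' h).choose_spec.1
    refine ⟨n, hn, z, hz0, ?_, ?_⟩
    · have hend : π (z n) = π b := by rw [hinv n le_rfl, hwn]
      exact hfib b (z n) hend.symm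
    · intro k hk
      rw [hzsucc, dif_pos ⟨hk, hinv k hk.le⟩]
      exact (step (z k) k hk (hinv k hk.le)).choose_spec.2
  -- dichotomy
  have dich : ∀ a b : Khat, ChainRel (⇑fhat) a b ∨ ChainRel (⇑fhat) a (σ b) := by
    intro a b
    by_cases h : ChainRel (⇑fhat) a b
    · exact Or.inl h
    · right
      simp only [ChainRel] at h
      push_neg at h
      obtain ⟨ε₀, hε₀, hno⟩ := h
      intro ε hε
      obtain ⟨n, hn, z, hz0, hend, hstep⟩ :=
        hlift_chain a b (min ε ε₀) (lt_min hε hε₀)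
      rcases hend with hend | hend
      · exfalso
        obtain ⟨k, hk, hge⟩ := hno n hn z hz0 hend
        have := hstep k hk
        have := min_le_right ε ε₀
        linarith
      · refine ⟨n, hn, z, hz0, hend, fun k hk => ?_⟩
        have := hstep k hk
        have := min_le_left ε ε₀
        linarith
  -- equivariance
  have equiv : ∀ a b : Khat, ChainRel (⇑fhat) a b → ChainRel (⇑fhat) (σ a) (σ b) :=
    fun a b hab => chainRel_map σ.continuous hcomm hab
  -- reflexivity
  have hrefl : ∀ a : Khat, ChainRel (⇑fhat) a a := by
    intro a
    rcases dich a a with h | h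
    · exact h
    · have h2 := equiv a (σ a) h
      rw [hσinv] at h2
      exact chainRel_trans h h2
  intro a b
  by_contra hab
  apply hnosplit
  refine ⟨{y | ChainRel (⇑fhat) a y}, ⟨a, hrefl a⟩, chainRel_isClosed _ _, ?_, ?_, ?_⟩
  · ext y
    constructor
    · rintro ⟨x, hx, rfl⟩
      exact chainRel_trans hx (chainRel_apply _ x)
    · intro hy
      exact ⟨fhat.symm y, chainRel_symm_target fhat (hrefl a) hy, fhat.apply_symm_apply y⟩
  · rw [eq_empty_iff_forall_notMem]
    rintro y ⟨⟨y', hy', rfl⟩, hy⟩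
    apply hab
    rcases dich (σ y') b with h | h
    · exact chainRel_trans hy h
    · have h2 := equiv _ _ h
      rw [hσinv, hσinv] at h2
      exact chainRel_trans hy' h2
  · rw [eq_univ_iff_forall]
    intro y
    rcases dich a y with h | h
    · exact Or.inl h
    · exact Or.inr ⟨σ y, h, hσinv y⟩
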